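/- Applying (k+1)-bit-compression (exchange of 10…0 ↔ 01…1 on k+1 bits) to independent bits with small biases ε_{k+1}, ε_k, …, ε_1 changes the bias of the leftmost bit, to first order, to ((2^{k-1} − 1)·ε_{k+1} + Σ_{j=1}^{k} ε_j)/2^{k-1}. -/

import Mathlib

/-- (k+1)-bit-compression (swap of 10…0 ↔ 01…1, all other states fixed) on
`k+1` independent bits with small biases changes the bias of the leftmost
bit, to first order, to `((2^{k-1} − 1)·ε_{k+1} + Σ_{j=1}^{k} ε_j)/2^{k-1}`.
"To first order" is formalized by scaling all biases by `t` and taking the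
derivative of the resulting leftmost bias at `t = 0`; the leftmost bit is
index `Fin.last k`, and `g t` is its bias after the gate. -/
theorem kBonacci_compression_first_order (k : ℕ) (hk : 1 ≤ k)
    (ε : Fin (k + 1) → ℝ)
    (p : ℝ → (Fin (k + 1) → Bool) → ℝ)
    (hp : ∀ t s, p t s =
      ∏ i : Fin (k + 1),
        (if s i then (1 - t * ε i) / 2 else (1 + t * ε i) / 2))
    (q : ℝ → (Fin (k + 1) → Bool) → ℝ)
    (hq : ∀ t s, q t s =
      if s = (fun i => decide (i = Fin.last k)) then
        p t (fun i => decide (i ≠ Fin.last k))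
      else if s = (fun i => decide (i ≠ Fin.last k)) then
        p t (fun i => decide (i = Fin.last k))
      else p t s)
    (g : ℝ → ℝ)
    (hg : ∀ t, g t =
      ∑ s : Fin (k + 1) → Bool,
        (if s (Fin.last k) then (-1 : ℝ) else 1) * q t s) :
    g 0 = 0 ∧
    HasDerivAt g
      ((((2 : ℝ) ^ (k - 1) - 1) * ε (Fin.last k) +
        ∑ j ∈ Finset.univ.erase (Fin.last k), ε j) / 2 ^ (k - 1)) 0 := by
  classical
  set L := Fin.last k with hL
  set s₁ : Fin (k + 1) → Bool := fun i => decide (i = L) with hs₁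
  set s₂ : Fin (k + 1) → Bool := fun i => decide (i ≠ L) with hs₂
  have hne : s₁ ≠ s₂ := by
    intro h
    have := congrFun h L
    simp [hs₁, hs₂] at this
  set F : ℝ → ℝ := fun t => ∏ i ∈ Finset.univ.erase L, (1 + t * ε i) with hF
  set G : ℝ → ℝ := fun t => ∏ i ∈ Finset.univ.erase L, (1 - t * ε i) with hG
  set S : ℝ := ∑ j ∈ Finset.univ.erase L, ε j with hS
  -- evaluate p at the two special states
  have hps₁ : ∀ t, p t s₁ = (1 - t * ε L) / 2 * (F t / 2 ^ k) := by
    intro t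
    rw [hp]
    have h1 : ∀ i : Fin (k + 1),
        (if s₁ i then (1 - t * ε i) / 2 else (1 + t * ε i) / 2)
          = (if i = L then (1 - t * ε i) / 2 else (1 + t * ε i) / 2) := by
      intro i; by_cases h : i = L <;> simp [hs₁, h]
    rw [Finset.prod_congr rfl fun i _ => h1 i,
      ← Finset.mul_prod_erase _ _ (Finset.mem_univ L), if_pos rfl]
    congr 1
    rw [Finset.prod_congr rfl (fun i hi => if_neg (Finset.ne_of_mem_erase hi)),
      Finset.prod_div_distrib, Finset.prod_const,
      Finset.card_erase_of_mem (Finset.mem_univ L), Finset.card_univ, Fintype.card_fin,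
      Nat.add_sub_cancel]
  have hps₂ : ∀ t, p t s₂ = (1 + t * ε L) / 2 * (G t / 2 ^ k) := by
    intro t
    rw [hp]
    have h1 : ∀ i : Fin (k + 1),
        (if s₂ i then (1 - t * ε i) / 2 else (1 + t * ε i) / 2)
          = (if i = L then (1 + t * ε i) / 2 else (1 - t * ε i) / 2) := by
      intro i; by_cases h : i = L <;> simp [hs₂, h]
    rw [Finset.prod_congr rfl fun i _ => h1 i,
      ← Finset.mul_prod_erase _ _ (Finset.mem_univ L), if_pos rfl]
    congr 1
    rw [Finset.prod_congr rfl (fun i hi => if_neg (Finset.ne_of_mem_erase hi)),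
      Finset.prod_div_distrib, Finset.prod_const,
      Finset.card_erase_of_mem (Finset.mem_univ L), Finset.card_univ, Fintype.card_fin,
      Nat.add_sub_cancel]
  -- closed form for g
  have hclaim : ∀ t, g t =
      t * ε L + ((1 - t * ε L) * F t - (1 + t * ε L) * G t) / 2 ^ k := by
    intro t
    have hA : ∑ s : Fin (k + 1) → Bool,
        (if s L then (-1 : ℝ) else 1) * p t s = t * ε L := by
      have hrw : ∀ s : Fin (k + 1) → Bool,
          (if s L then (-1 : ℝ) else 1) * p t s
            = ∏ i : Fin (k + 1),
                (if i = L then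
                  (if s i then -((1 - t * ε i) / 2) else (1 + t * ε i) / 2)
                else
                  (if s i then (1 - t * ε i) / 2 else (1 + t * ε i) / 2)) := by
        intro s
        rw [hp]
        rw [show (∏ i : Fin (k+1),
            (if s i then (1 - t * ε i) / 2 else (1 + t * ε i) / 2))
          = (if s L then (1 - t * ε L) / 2 else (1 + t * ε L) / 2) *
            ∏ i ∈ Finset.univ.erase L,
              (if s i then (1 - t * ε i) / 2 else (1 + t * ε i) / 2)
          from (Finset.mul_prod_erase _ _ (Finset.mem_univ L)).symm]
        rw [show (∏ i : Fin (k+1),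
            (if i = L then
              (if s i then -((1 - t * ε i) / 2) else (1 + t * ε i) / 2)
            else
              (if s i then (1 - t * ε i) / 2 else (1 + t * ε i) / 2)))
          = (if L = L then
              (if s L then -((1 - t * ε L) / 2) else (1 + t * ε L) / 2)
            else
              (if s L then (1 - t * ε L) / 2 else (1 + t * ε L) / 2)) *
            ∏ i ∈ Finset.univ.erase L,
              (if i = L then
                (if s i then -((1 - t * ε i) / 2) else (1 + t * ε i) / 2)
              else
                (if s i then (1 - t * ε i) / 2 else (1 + t * ε i) / 2))
          from (Finset.mul_prod_erase _ _ (Finset.mem_univ L)).symm]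
        rw [← mul_assoc]
        congr 1
        · cases h : s L <;> simp [h]
        · exact (Finset.prod_congr rfl fun i hi =>
            (if_neg (Finset.ne_of_mem_erase hi)).symm)
      rw [Finset.sum_congr rfl fun s _ => hrw s,
        ← Fintype.prod_sum (fun (i : Fin (k+1)) (b : Bool) =>
          if i = L then
            (if b then -((1 - t * ε i) / 2) else (1 + t * ε i) / 2)
          else
            (if b then (1 - t * ε i) / 2 else (1 + t * ε i) / 2))]
      rw [Finset.prod_eq_single L
        (fun i _ hi => by simp [hi]; ring)
        (fun h => absurd (Finset.mem_univ L) h)]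
      simp
      ring
    have hq1 : q t s₁ = p t s₂ := by rw [hq, if_pos rfl]
    have hq2 : q t s₂ = p t s₁ := by
      rw [hq, if_neg (fun h => hne h.symm), if_pos rfl]
    have hzero : ∀ s ∈ (Finset.univ : Finset (Fin (k+1) → Bool)),
        s ∉ ({s₁, s₂} : Finset (Fin (k+1) → Bool)) →
        (if s L then (-1 : ℝ) else 1) * (q t s - p t s) = 0 := by
      intro s _ hs
      simp only [Finset.mem_insert, Finset.mem_singleton, not_or] at hs
      rw [hq, if_neg hs.1, if_neg hs.2]
      ring
    have hB : ∑ s : Fin (k + 1) → Bool,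
        (if s L then (-1 : ℝ) else 1) * (q t s - p t s)
          = 2 * (p t s₁ - p t s₂) := by
      rw [← Finset.sum_subset (Finset.subset_univ ({s₁, s₂} : Finset _)) hzero,
        Finset.sum_pair hne, hq1, hq2]
      have e1 : s₁ L = true := by simp [hs₁]
      have e2 : s₂ L = false := by simp [hs₂]
      rw [e1, e2]
      simp
      ring
    rw [hg]
    calc ∑ s : Fin (k + 1) → Bool, (if s L then (-1 : ℝ) else 1) * q t s
        = (∑ s : Fin (k + 1) → Bool, (if s L then (-1 : ℝ) else 1) * p t s)
          + ∑ s : Fin (k + 1) → Bool,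
              (if s L then (-1 : ℝ) else 1) * (q t s - p t s) := by
          rw [← Finset.sum_add_distrib]
          exact Finset.sum_congr rfl fun s _ => by ring
      _ = t * ε L + 2 * (p t s₁ - p t s₂) := by rw [hA, hB]
      _ = t * ε L + ((1 - t * ε L) * F t - (1 + t * ε L) * G t) / 2 ^ k := by
          rw [hps₁, hps₂]; ring
  have hF0 : F 0 = 1 := by simp [hF]
  have hG0 : G 0 = 1 := by simp [hG]
  constructor
  · rw [hclaim 0, hF0, hG0]; ring
  · -- derivative
    have hFd : HasDerivAt F S 0 := by
      have := HasDerivAt.fun_finsetProd (u := Finset.univ.erase L)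
        (f := fun i t => 1 + t * ε i) (f' := ε) (x := (0 : ℝ))
        (fun i _ => (hasDerivAt_mul_const (ε i)).const_add 1)
      simpa [hF, hS, smul_eq_mul] using this
    have hGd : HasDerivAt G (-S) 0 := by
      have := HasDerivAt.fun_finsetProd (u := Finset.univ.erase L)
        (f := fun i t => 1 - t * ε i) (f' := fun i => -ε i) (x := (0 : ℝ))
        (fun i _ => (hasDerivAt_mul_const (ε i)).const_sub 1)
      simpa [hG, hS, smul_eq_mul, Finset.sum_neg_distrib] using this
    have h1 : HasDerivAt (fun t : ℝ => t * ε L) (ε L) 0 := hasDerivAt_mul_const _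
    have h2 : HasDerivAt (fun t : ℝ => 1 - t * ε L) (-ε L) 0 :=
      (hasDerivAt_mul_const (ε L)).const_sub 1
    have h3 : HasDerivAt (fun t : ℝ => 1 + t * ε L) (ε L) 0 :=
      (hasDerivAt_mul_const (ε L)).const_add 1
    have hmain : HasDerivAt
        (fun t => t * ε L + ((1 - t * ε L) * F t - (1 + t * ε L) * G t) / 2 ^ k)
        (ε L + ((-ε L * F 0 + (1 - 0 * ε L) * S)
          - (ε L * G 0 + (1 + 0 * ε L) * (-S))) / 2 ^ k) 0 :=
      h1.add (((h2.mul hFd).sub (h3.mul hGd)).div_const _)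
    have hgfun : g = fun t =>
        t * ε L + ((1 - t * ε L) * F t - (1 + t * ε L) * G t) / 2 ^ k :=
      funext hclaim
    rw [hgfun]
    convert hmain using 1
    rw [hF0, hG0]
    have hk2 : (2 : ℝ) ^ k = 2 ^ (k - 1) * 2 := by
      rw [← pow_succ, Nat.sub_add_cancel hk]
    rw [hk2]
    have h2k : (2 : ℝ) ^ (k - 1) ≠ 0 := by positivity
    field_simp
    ring
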